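/- If M is a square 0-1 integer matrix whose associated bipartite graph is acyclic, then |det_ℤ(M)| ∈ {0, 1}. -/

import Mathlib

open Matrix BigOperators

/-- The bipartite graph associated to a square 0-1 matrix `M`: left vertices
are rows, right vertices are columns, with an edge `(j,k)` iff `M j k = 1`. -/
def bipartiteGraph {m : ℕ} (M : Matrix (Fin m) (Fin m) ℤ) :
    SimpleGraph (Fin m ⊕ Fin m) :=
  SimpleGraph.fromRel (fun a b => ∃ j k, a = Sum.inl j ∧ b = Sum.inr k ∧ M j k = 1)

lemma bipartiteGraph_adj {m : ℕ} (M : Matrix (Fin m) (Fin m) ℤ) {j k : Fin m}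
    (h : M j k = 1) : (bipartiteGraph M).Adj (Sum.inl j) (Sum.inr k) := by
  rw [bipartiteGraph, SimpleGraph.fromRel_adj]
  exact ⟨by simp, Or.inl ⟨j, k, rfl, rfl, h⟩⟩

/-- An acyclic bipartite graph supports at most one perfect matching. -/
lemma matching_unique {m : ℕ} (M : Matrix (Fin m) (Fin m) ℤ)
    (hacyc : (bipartiteGraph M).IsAcyclic) (σ τ : Equiv.Perm (Fin m))
    (hσ : ∀ j, M j (σ j) = 1) (hτ : ∀ j, M j (τ j) = 1) : σ = τ := by
  by_contra hne
  have hex : ∃ i, σ i ≠ τ i := by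
    by_contra hc
    push_neg at hc
    exact hne (Equiv.ext hc)
  obtain ⟨i₀, hi₀⟩ := hex
  set h : Equiv.Perm (Fin m) := σ⁻¹ * τ with hh
  have hhi₀ : h i₀ ≠ i₀ := by
    intro hc
    apply hi₀
    have : σ (h i₀) = σ i₀ := by rw [hc]
    simpa [hh] using this.symm
  have hσh : ∀ x, σ (h x) = τ x := by
    intro x; simp [hh]
  -- minimal period
  set n := Function.minimalPeriod (⇑h) i₀ with hn
  have hper : Function.IsPeriodicPt (⇑h) (orderOf h) i₀ := by
    unfold Function.IsPeriodicPt Function.IsFixedPt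
    rw [Equiv.Perm.iterate_eq_pow, pow_orderOf_eq_one]
    rfl
  have hnpos : 0 < n := hper.minimalPeriod_pos (orderOf_pos h)
  have hnper : (⇑h)^[n] i₀ = i₀ := Function.iterate_minimalPeriod
  have hnotper : ∀ k, 0 < k → k < n → (⇑h)^[k] i₀ ≠ i₀ := fun k hk hkn =>
    Function.not_isPeriodicPt_of_pos_of_lt_minimalPeriod hk.ne' hkn
  have hn1 : 1 < n := by
    rcases Nat.lt_or_ge 1 n with h1 | h1
    · exact h1
    · interval_cases n
      · exact absurd hnper hhi₀
  -- the graph minus the edge (inl i₀, inr (σ i₀))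
  set e : Sym2 (Fin m ⊕ Fin m) := s(Sum.inl i₀, Sum.inr (σ i₀)) with he
  set G' := bipartiteGraph M \ SimpleGraph.fromEdgeSet {e} with hG'
  have hadj' : ∀ j k : Fin m, M j k = 1 → (j ≠ i₀ ∨ k ≠ σ i₀) →
      G'.Adj (Sum.inl j) (Sum.inr k) := by
    intro j k h1 hne2
    refine ⟨bipartiteGraph_adj M h1, ?_⟩
    simp only [SimpleGraph.fromEdgeSet_adj, Set.mem_singleton_iff, he, Sym2.eq_iff]
    rintro ⟨(⟨hj, hk⟩ | ⟨hj, hk⟩), -⟩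
    · rcases hne2 with hne2 | hne2
      · exact hne2 (Sum.inl.inj hj)
      · exact hne2 (Sum.inr.inj hk)
    · exact absurd hj (by simp)
  -- walk around the cycle
  have key : ∀ d, d < n → G'.Reachable (Sum.inl ((⇑h)^[n - 1 - d] i₀)) (Sum.inr (σ i₀)) := by
    intro d
    induction d with
    | zero =>
      intro _
      have hne3 : (⇑h)^[n - 1] i₀ ≠ i₀ := hnotper _ (by omega) (by omega)
      have hτσ : τ ((⇑h)^[n - 1] i₀) = σ i₀ := by
        rw [← hσh, ← Function.iterate_succ_apply' (⇑h), Nat.succ_eq_add_one]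
        rw [show n - 1 + 1 = n by omega, hnper]
      have := hadj' ((⇑h)^[n - 1] i₀) (τ ((⇑h)^[n - 1] i₀)) (hτ _) (Or.inl hne3)
      rw [hτσ] at this
      simpa using this.reachable
    | succ d ih =>
      intro hd
      have hih := ih (by omega)
      set k := n - 1 - (d + 1) with hk
      have hk1 : k + 1 = n - 1 - d := by omega
      have hne4 : (⇑h)^[k + 1] i₀ ≠ i₀ := hnotper _ (by omega) (by omega)
      -- edge 1 : inl (h^[k] i₀) — inr (τ (h^[k] i₀)) = inr (σ (h^[k+1] i₀))
      have hτσ : τ ((⇑h)^[k] i₀) = σ ((⇑h)^[k + 1] i₀) := by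
        rw [Function.iterate_succ_apply' (⇑h), hσh]
      have hside : (⇑h)^[k] i₀ ≠ i₀ ∨ τ ((⇑h)^[k] i₀) ≠ σ i₀ := by
        rcases Nat.eq_zero_or_pos k with hk0 | hk0
        · right
          rw [hτσ]
          intro hc
          exact hne4 (σ.injective hc)
        · exact Or.inl (hnotper _ hk0 (by omega))
      have hA1 : G'.Adj (Sum.inl ((⇑h)^[k] i₀)) (Sum.inr (σ ((⇑h)^[k + 1] i₀))) := by
        have := hadj' ((⇑h)^[k] i₀) (τ ((⇑h)^[k] i₀)) (hτ _) hside
        rwa [hτσ] at this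
      -- edge 2 : inl (h^[k+1] i₀) — inr (σ (h^[k+1] i₀))
      have hA2 : G'.Adj (Sum.inl ((⇑h)^[k + 1] i₀)) (Sum.inr (σ ((⇑h)^[k + 1] i₀))) :=
        hadj' _ _ (hσ _) (Or.inl hne4)
      rw [← hk1] at hih
      exact hA1.reachable.trans (hA2.symm.reachable.trans hih)
  have hreach : G'.Reachable (Sum.inl i₀) (Sum.inr (σ i₀)) := by
    have := key (n - 1) (by omega)
    rwa [show n - 1 - (n - 1) = 0 by omega, Function.iterate_zero_apply] at this
  have hbridge := (SimpleGraph.isAcyclic_iff_forall_adj_isBridge.mp hacyc)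
    (bipartiteGraph_adj M (hσ i₀))
  rw [SimpleGraph.isBridge_iff] at hbridge
  exact hbridge hreach

/-- If the bipartite graph of a square 0-1 integer matrix is acyclic, then
`|det M| ∈ {0, 1}`. -/
theorem stmt14 {m : ℕ} (M : Matrix (Fin m) (Fin m) ℤ)
    (hM : ∀ j k, M j k = 0 ∨ M j k = 1)
    (hacyc : (bipartiteGraph M).IsAcyclic) :
    |M.det| = 0 ∨ |M.det| = 1 := by
  rw [Matrix.det_apply]
  by_cases hex : ∃ σ : Equiv.Perm (Fin m), ∀ i, M (σ i) i = 1
  · obtain ⟨σ₀, hσ₀⟩ := hex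
    right
    have hsum : ∑ σ : Equiv.Perm (Fin m), Equiv.Perm.sign σ • ∏ i, M (σ i) i
        = Equiv.Perm.sign σ₀ • ∏ i, M (σ₀ i) i := by
      apply Finset.sum_eq_single σ₀
      · intro σ _ hσne
        have : ¬ ∀ i, M (σ i) i = 1 := by
          intro hall
          apply hσne
          have h1 : ∀ j, M j (σ⁻¹ j) = 1 := fun j => by
            simpa using hall (σ⁻¹ j)
          have h2 : ∀ j, M j (σ₀⁻¹ j) = 1 := fun j => by
            simpa using hσ₀ (σ₀⁻¹ j)
          have := matching_unique M hacyc σ⁻¹ σ₀⁻¹ h1 h2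
          exact inv_injective this
        push_neg at this
        obtain ⟨i, hi⟩ := this
        have hzero : M (σ i) i = 0 := (hM _ _).resolve_right hi
        have hp : ∏ x, M (σ x) x = 0 := Finset.prod_eq_zero (Finset.mem_univ i) hzero
        rw [hp, smul_zero]
      · intro hmem
        exact absurd (Finset.mem_univ σ₀) hmem
    rw [hsum]
    have hprod : ∏ i, M (σ₀ i) i = 1 := Finset.prod_eq_one fun i _ => hσ₀ i
    rw [hprod]
    rcases Int.units_eq_one_or (Equiv.Perm.sign σ₀) with hs | hs <;> simp [hs]
  · left
    push_neg at hex
    have : ∀ σ : Equiv.Perm (Fin m), Equiv.Perm.sign σ • ∏ i, M (σ i) i = 0 := by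
      intro σ
      obtain ⟨i, hi⟩ := hex σ
      have hzero : M (σ i) i = 0 := (hM _ _).resolve_right hi
      have hp : ∏ x, M (σ x) x = 0 := Finset.prod_eq_zero (Finset.mem_univ i) hzero
      rw [hp, smul_zero]
    rw [Finset.sum_congr rfl (fun σ _ => this σ), Finset.sum_const, smul_zero, abs_zero]
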